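/- Let x_0,…,x_n ∈ ℝ^n be affinely independent and positively oriented, i.e. det[x_1 − x_0, …, x_n − x_0] > 0. Let a ∈ ℝ^n have barycentric coordinates λ_0,…,λ_n (Σ_k λ_k = 1, a = Σ_k λ_k x_k) satisfying λ_i ≠ 0 for every i. With v_j := x_j − a, B_i the n×n matrix with columns v_j for j ≠ i (in increasing order of j), and K_i := { a + Σ_{k≠i} s_k v_k : s_k ≥ 0 }, the following holds for every Lebesgue-integrable f : ℝ^n → ℝ: Σ_{i=0}^n (−1)^i · sign(det B_i) · ∫_{K_i} f dx equals ∫_{ℝ^n} f dx if a lies in the convex hull of {x_0,…,x_n}, and equals 0 otherwise. -/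

import Mathlib

open MeasureTheory Classical

open Matrix

/-- The matrix `B_i` whose columns are the vectors `v_j = x_j − a` for `j ≠ i`,
in increasing order of `j`. -/
noncomputable def coneMatrix (n : ℕ) (x : Fin (n + 1) → (Fin n → ℝ)) (a : Fin n → ℝ)
    (i : Fin (n + 1)) : Matrix (Fin n) (Fin n) ℝ :=
  Matrix.of fun r c => (x (i.succAbove c) - a) r

/-- The infinite cone `K_i = { a + Σ_{k≠i} s_k (x_k − a) : s_k ≥ 0 }` over the `i`-th
facet of the simplex `[x_0,…,x_n]`, with apex `a`. -/
def facetCone (n : ℕ) (x : Fin (n + 1) → (Fin n → ℝ)) (a : Fin n → ℝ)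
    (i : Fin (n + 1)) : Set (Fin n → ℝ) :=
  { p | ∃ s : Fin (n + 1) → ℝ, (∀ k, k ≠ i → 0 ≤ s k) ∧
      p = a + ∑ k ∈ Finset.univ.erase i, s k • (x k - a) }


noncomputable def Amat (n : ℕ) (x : Fin (n + 1) → (Fin n → ℝ)) : Matrix (Fin n) (Fin n) ℝ :=
  Matrix.of fun r c => (x c.succ - x 0) r

noncomputable def mu (n : ℕ) (x : Fin (n + 1) → (Fin n → ℝ)) (y : Fin n → ℝ) :
    Fin (n + 1) → ℝ :=
  Fin.cons (1 - ∑ c, ((Amat n x)⁻¹ *ᵥ (y - x 0)) c) ((Amat n x)⁻¹ *ᵥ (y - x 0))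

lemma mu_sum (n : ℕ) (x : Fin (n + 1) → (Fin n → ℝ)) (y : Fin n → ℝ) :
    ∑ k, mu n x y k = 1 := by
  rw [Fin.sum_univ_succ]
  simp [mu]

lemma mu_comb {n : ℕ} {x : Fin (n + 1) → (Fin n → ℝ)} (hA : (Amat n x).det ≠ 0)
    (y : Fin n → ℝ) : ∑ k, mu n x y k • x k = y := by
  set w := (Amat n x)⁻¹ *ᵥ (y - x 0) with hw
  have hAw : Amat n x *ᵥ w = y - x 0 := by
    rw [hw, Matrix.mulVec_mulVec, Matrix.mul_nonsing_inv _ (isUnit_iff_ne_zero.mpr hA),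
      Matrix.one_mulVec]
  funext r
  have hAwr := congrFun hAw r
  simp only [Matrix.mulVec, dotProduct, Amat, Matrix.of_apply, Pi.sub_apply] at hAwr
  have : ∑ c, (x c.succ r - x 0 r) * w c
      = ∑ c, w c * x c.succ r - (∑ c, w c) * x 0 r := by
    rw [Finset.sum_mul, ← Finset.sum_sub_distrib]; congr 1; ext c; ring
  rw [this] at hAwr
  have : (∑ k, mu n x y k • x k) r = ∑ k, mu n x y k * x k r := by
    simp [Finset.sum_apply]
  rw [this, Fin.sum_univ_succ]
  simp only [mu, Fin.cons_zero, Fin.cons_succ]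
  have : ∑ i : Fin n, w i * x i.succ r = y r - x 0 r + (∑ c, w c) * x 0 r := by
    linarith [hAwr]
  rw [this]; ring

lemma coeff_unique {n : ℕ} {x : Fin (n + 1) → (Fin n → ℝ)} (hA : (Amat n x).det ≠ 0)
    (c : Fin (n + 1) → ℝ) (h0 : ∑ k, c k = 0) (h1 : ∑ k, c k • x k = 0) :
    ∀ k, c k = 0 := by
  set u : Fin n → ℝ := fun j => c j.succ with hu
  have hAu : Amat n x *ᵥ u = 0 := by
    funext r
    have h1r := congrFun h1 r
    simp only [Finset.sum_apply, Pi.smul_apply, smul_eq_mul, Pi.zero_apply] at h1r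
    simp only [Matrix.mulVec, dotProduct, Amat, Matrix.of_apply, Pi.sub_apply,
      Pi.zero_apply, hu]
    have : ∑ j : Fin n, (x j.succ r - x 0 r) * c j.succ
        = ∑ j : Fin n, c j.succ * x j.succ r - (∑ j : Fin n, c j.succ) * x 0 r := by
      rw [Finset.sum_mul, ← Finset.sum_sub_distrib]; congr 1; ext j; ring
    rw [this]
    have hs0 : ∑ j : Fin n, c j.succ = - c 0 := by
      rw [Fin.sum_univ_succ] at h0; linarith
    rw [Fin.sum_univ_succ] at h1r
    rw [hs0]; ring_nf; linarith [h1r]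
  have hu0 : u = 0 := by
    have := congrArg (fun v => (Amat n x)⁻¹ *ᵥ v) hAu
    simpa [Matrix.mulVec_mulVec, Matrix.nonsing_inv_mul _ (isUnit_iff_ne_zero.mpr hA),
      Matrix.one_mulVec, Matrix.mulVec_zero] using this
  have hc0 : c 0 = 0 := by
    rw [Fin.sum_univ_succ] at h0
    have : ∑ j : Fin n, c j.succ = 0 := by
      simp only [← hu]  -- u j = c j.succ
      rw [hu0]; simp
    linarith
  intro k
  refine Fin.cases hc0 (fun j => ?_) k
  have := congrFun hu0 j
  simpa [hu] using this

lemma mu_unique {n : ℕ} {x : Fin (n + 1) → (Fin n → ℝ)} (hA : (Amat n x).det ≠ 0)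
    {y : Fin n → ℝ} {c : Fin (n + 1) → ℝ} (h0 : ∑ k, c k = 1) (h1 : ∑ k, c k • x k = y) :
    mu n x y = c := by
  funext k
  have key := coeff_unique hA (fun k => mu n x y k - c k) ?_ ?_ k
  · linarith
  · rw [Finset.sum_sub_distrib, mu_sum, h0]; ring
  · have : ∑ k, (mu n x y k - c k) • x k = (∑ k, mu n x y k • x k) - ∑ k, c k • x k := by
      rw [← Finset.sum_sub_distrib]; congr 1; ext k; rw [sub_smul]
    rw [this, mu_comb hA, h1, sub_self]

lemma mu_vertex {n : ℕ} {x : Fin (n + 1) → (Fin n → ℝ)} (hA : (Amat n x).det ≠ 0)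
    (j : Fin (n + 1)) : mu n x (x j) = fun k => if k = j then 1 else 0 := by
  refine mu_unique hA ?_ ?_
  · simp
  · rw [Finset.sum_eq_single j] <;> simp (config := {contextual := true})


section main
variable {n : ℕ} {x : Fin (n + 1) → (Fin n → ℝ)} {a : Fin n → ℝ} {lam : Fin (n + 1) → ℝ}

lemma sum_ite_erase {m : ℕ} (i : Fin m) (g : Fin m → ℝ) :
    (∑ k, if k = i then (0:ℝ) else g k) = ∑ k ∈ Finset.univ.erase i, g k :=
  ((Finset.sum_erase _ (by simp)).symm).trans
    (Finset.sum_congr rfl fun k hk => if_neg (Finset.mem_erase.mp hk).1)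

lemma sum_mul_sub {m : ℕ} (c : Fin m → ℝ) (xr : Fin m → ℝ) (ar : ℝ) :
    ∑ k, c k * (xr k - ar) = (∑ k, c k * xr k) - (∑ k, c k) * ar := by
  rw [Finset.sum_mul, ← Finset.sum_sub_distrib]
  exact Finset.sum_congr rfl fun k _ => by ring

lemma mem_facetCone_iff (hA : (Amat n x).det ≠ 0)
    (hsum : ∑ k, lam k = 1) (hbary : a = ∑ k, lam k • x k)
    {i : Fin (n + 1)} (hli : lam i ≠ 0) (y : Fin n → ℝ) :
    y ∈ facetCone n x a i ↔
      ∀ k, k ≠ i → 0 ≤ mu n x y k - (mu n x y i / lam i) * lam k := by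
  have hmusum := mu_sum n x y
  have ha_r : ∀ r, a r = ∑ k, lam k * x k r := by
    intro r
    rw [hbary]; simp [Finset.sum_apply]
  constructor
  · rintro ⟨s, hs, rfl⟩
    set S := ∑ k ∈ Finset.univ.erase i, s k with hS
    set c : Fin (n + 1) → ℝ := fun k => (1 - S) * lam k + if k = i then 0 else s k with hc
    have hc0 : ∑ k, c k = 1 := by
      simp only [hc]
      rw [Finset.sum_add_distrib, ← Finset.mul_sum, hsum, sum_ite_erase i s, ← hS]; ring
    have hc1 : ∑ k, c k • x k = a + ∑ k ∈ Finset.univ.erase i, s k • (x k - a) := by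
      funext r
      simp only [Finset.sum_apply, Pi.add_apply, Pi.smul_apply, smul_eq_mul, Pi.sub_apply]
      rw [← sum_ite_erase i (fun k => s k * (x k r - a r))]
      have e1 : ∑ k, c k * x k r
          = (1 - S) * (∑ k, lam k * x k r) + ∑ k, (if k = i then (0:ℝ) else s k * x k r) := by
        rw [Finset.mul_sum, ← Finset.sum_add_distrib]
        refine Finset.sum_congr rfl fun k _ => ?_
        simp only [hc]
        split_ifs <;> ring
      have e2 : ∑ k, (if k = i then (0:ℝ) else s k * (x k r - a r))
          = (∑ k, if k = i then (0:ℝ) else s k * x k r) - S * a r := by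
        rw [hS, ← sum_ite_erase i s, Finset.sum_mul, ← Finset.sum_sub_distrib]
        refine Finset.sum_congr rfl fun k _ => ?_
        split_ifs <;> ring
      rw [e1, e2, ← ha_r r]
      ring
    have hmu : mu n x (a + ∑ k ∈ Finset.univ.erase i, s k • (x k - a)) = c :=
      mu_unique hA hc0 hc1
    intro k hk
    rw [hmu]
    have hck : c k = (1 - S) * lam k + s k := by simp only [hc]; rw [if_neg hk]
    have hci : c i = (1 - S) * lam i := by simp [hc]
    rw [hck, hci]
    have : (1 - S) * lam k + s k - (1 - S) * lam i / lam i * lam k = s k := by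
      field_simp
      ring
    rw [this]
    exact hs k hk
  · intro h
    set q := mu n x y i / lam i with hq
    refine ⟨fun k => mu n x y k - q * lam k, fun k hk => h k hk, ?_⟩
    have hsi : mu n x y i - q * lam i = 0 := by
      rw [hq]; field_simp; ring
    have herase : ∑ k ∈ Finset.univ.erase i, (mu n x y k - q * lam k) • (x k - a)
        = ∑ k, (mu n x y k - q * lam k) • (x k - a) := by
      rw [← Finset.add_sum_erase _ _ (Finset.mem_univ i), hsi]
      simp
    rw [herase]
    funext r
    have hcomb_r : ∑ k, mu n x y k * x k r = y r := by
      have := congrFun (mu_comb hA y) r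
      simpa [Finset.sum_apply] using this
    simp only [Pi.add_apply, Finset.sum_apply, Pi.smul_apply, smul_eq_mul, Pi.sub_apply]
    have l1 : ∀ z : Fin (n + 1) → ℝ, ∑ k, (mu n x y k - q * lam k) * z k
        = (∑ k, mu n x y k * z k) - q * ∑ k, lam k * z k := by
      intro z
      rw [Finset.mul_sum, ← Finset.sum_sub_distrib]
      exact Finset.sum_congr rfl fun k _ => by ring
    have l2 : ∑ k, (mu n x y k - q * lam k) = 1 - q := by
      rw [Finset.sum_sub_distrib, ← Finset.mul_sum, hmusum, hsum]; ring
    rw [sum_mul_sub, l1 (fun k => x k r), l2, hcomb_r, ← ha_r r]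
    ring

end main

noncomputable def Tmat (n : ℕ) (z : Fin (n + 1) → (Fin n → ℝ)) :
    Matrix (Fin (n + 1)) (Fin (n + 1)) ℝ :=
  Matrix.of fun k => Fin.cons 1 (z k)

lemma detT (n : ℕ) (z : Fin (n + 1) → (Fin n → ℝ)) :
    (Tmat n z).det = (Matrix.of fun (c r : Fin n) => z c.succ r - z 0 r).det := by
  set B : Matrix (Fin (n + 1)) (Fin (n + 1)) ℝ :=
    Matrix.of fun k => Fin.cases (motive := fun _ => Fin (n + 1) → ℝ) (Fin.cons 1 (z 0))
      (fun j => Fin.cons 0 (fun r => z j.succ r - z 0 r)) k with hB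
  have h1 : (Tmat n z).det = B.det := by
    apply Matrix.det_eq_of_forall_row_eq_smul_add_const
      (fun k => if k = 0 then (0:ℝ) else 1) 0 (if_pos rfl)
    intro k j
    refine Fin.cases ?_ (fun k' => ?_) k
    · simp [Tmat, hB]
    · refine Fin.cases ?_ (fun j' => ?_) j
      · simp [Tmat, hB, Fin.succ_ne_zero]
      · simp [Tmat, hB, Fin.succ_ne_zero]
  rw [h1, Matrix.det_succ_column_zero]
  rw [Fin.sum_univ_succ]
  have hz : ∀ j : Fin n, B j.succ 0 = 0 := by
    intro j; simp [hB]
  have hrest : ∑ j : Fin n, (-1 : ℝ) ^ ((j.succ : Fin (n+1)) : ℕ) * B j.succ 0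
      * (B.submatrix (Fin.succAbove j.succ) Fin.succ).det = 0 := by
    apply Finset.sum_eq_zero
    intro j _
    rw [hz j]; ring
  rw [hrest, add_zero]
  have h00 : B 0 0 = 1 := by simp [hB]
  rw [h00]
  have hsub : B.submatrix (Fin.succAbove 0) Fin.succ
      = Matrix.of fun (c r : Fin n) => z c.succ r - z 0 r := by
    funext c r
    simp [hB, Fin.succAbove_zero]
  rw [hsub]
  norm_num

section main2
variable {n : ℕ} {x : Fin (n + 1) → (Fin n → ℝ)} {a : Fin n → ℝ} {lam : Fin (n + 1) → ℝ}

lemma det_coneMatrix (hsum : ∑ k, lam k = 1) (hbary : a = ∑ k, lam k • x k)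
    (i : Fin (n + 1)) :
    (coneMatrix n x a i).det = (-1 : ℝ) ^ (i : ℕ) * lam i * (Amat n x).det := by
  -- row (1, a) as combination of rows of Tmat
  have hrow : (Fin.cons 1 a : Fin (n + 1) → ℝ) = ∑ k, lam k • Tmat n x k := by
    funext j
    refine Fin.cases ?_ (fun r => ?_) j
    · simp [Tmat, Finset.sum_apply, hsum]
    · have := congrFun hbary r
      simp only [Finset.sum_apply, Pi.smul_apply, smul_eq_mul] at this ⊢
      simp [Tmat, this]
  have hupdate : ((Tmat n x).updateRow i (Fin.cons 1 a)).det = lam i * (Tmat n x).det := by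
    rw [hrow, Matrix.det_updateRow_sum]
    simp
  -- the updated matrix is a row permutation of Tmat of the cone family
  set z : Fin (n + 1) → (Fin n → ℝ) := Fin.cons a (fun c => x (i.succAbove c)) with hzdef
  have hperm : (Tmat n x).updateRow i (Fin.cons 1 a)
      = (Tmat n z).submatrix (Fin.cycleRange i) id := by
    funext k j
    by_cases hk : k = i
    · subst hk
      simp [Matrix.updateRow_self, Tmat, Fin.cycleRange_self, hzdef]
    · obtain ⟨c, rfl⟩ := Fin.exists_succAbove_eq hk
      rw [Matrix.updateRow_ne hk]
      simp [Tmat, Fin.cycleRange_succAbove, hzdef]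
  have hdetperm : ((Tmat n z).submatrix (Fin.cycleRange i) id).det
      = (-1 : ℝ) ^ (i : ℕ) * (Tmat n z).det := by
    rw [Matrix.det_permute, Fin.sign_cycleRange]
    norm_num
  have hTz : (Tmat n z).det = (coneMatrix n x a i).det := by
    rw [detT, ← Matrix.det_transpose (coneMatrix n x a i)]
    congr 1 <;> (funext c r; simp [hzdef, coneMatrix, Matrix.transpose_apply])
  have hTx : (Tmat n x).det = (Amat n x).det := by
    rw [detT, ← Matrix.det_transpose (Amat n x)]
    congr 1 <;> (funext c r; simp [Amat, Matrix.transpose_apply])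
  have := hupdate
  rw [hperm, hdetperm, hTz, hTx] at this
  have hsq : ((-1 : ℝ) ^ (i : ℕ)) * ((-1 : ℝ) ^ (i : ℕ)) = 1 := by
    rw [← pow_add]
    exact Even.neg_one_pow ⟨(i : ℕ), rfl⟩
  calc (coneMatrix n x a i).det
      = ((-1 : ℝ) ^ (i : ℕ) * (-1 : ℝ) ^ (i : ℕ)) * (coneMatrix n x a i).det := by
        rw [hsq, one_mul]
    _ = (-1 : ℝ) ^ (i : ℕ) * ((-1 : ℝ) ^ (i : ℕ) * (coneMatrix n x a i).det) := by ring
    _ = (-1 : ℝ) ^ (i : ℕ) * lam i * (Amat n x).det := by rw [this]; ring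

end main2

lemma key_comb {m : ℕ} (lam t : Fin (m + 1) → ℝ) (hlam : ∀ i, lam i ≠ 0)
    (hpos : ∃ i, 0 < lam i) (ht : Function.Injective t) :
    ∑ i, Real.sign (lam i) * (if ∀ k, k ≠ i → 0 < lam k * (t k - t i) then (1:ℝ) else 0)
      = if ∀ k, 0 < lam k then 1 else 0 := by
  obtain ⟨i0, hi0⟩ := hpos
  have hPne : (Finset.univ.filter fun k => 0 < lam k).Nonempty :=
    ⟨i0, Finset.mem_filter.mpr ⟨Finset.mem_univ _, hi0⟩⟩
  obtain ⟨iP, hiPmem, hiPmin⟩ :=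
    Finset.exists_min_image (Finset.univ.filter fun k => 0 < lam k) t hPne
  have hiP : 0 < lam iP := (Finset.mem_filter.mp hiPmem).2
  have hP' : ∀ k, 0 < lam k → t iP ≤ t k := fun k hk =>
    hiPmin k (Finset.mem_filter.mpr ⟨Finset.mem_univ _, hk⟩)
  by_cases hall : ∀ k, 0 < lam k
  · rw [if_pos hall]
    rw [Finset.sum_eq_single iP]
    · rw [if_pos, Real.sign_of_pos hiP, mul_one]
      intro k hk
      have h1 : t iP < t k := lt_of_le_of_ne (hP' k (hall k)) (fun h => hk (ht h.symm))
      exact mul_pos (hall k) (by linarith)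
    · intro b _ hb
      rw [if_neg, mul_zero]
      intro hQ
      have := hQ iP (fun h => hb h.symm)
      have h2 : t iP ≤ t b := hP' b (hall b)
      nlinarith [hall iP]
    · exact fun h => absurd (Finset.mem_univ iP) h
  · rw [if_neg hall]
    have hNne : ∃ k, lam k < 0 := by
      push_neg at hall
      obtain ⟨k, hk⟩ := hall
      exact ⟨k, (hlam k).lt_of_le hk⟩
    obtain ⟨k0, hk0⟩ := hNne
    have hNne' : (Finset.univ.filter fun k => lam k < 0).Nonempty :=
      ⟨k0, Finset.mem_filter.mpr ⟨Finset.mem_univ _, hk0⟩⟩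
    obtain ⟨iN, hiNmem, hiNmax⟩ :=
      Finset.exists_max_image (Finset.univ.filter fun k => lam k < 0) t hNne'
    have hiN : lam iN < 0 := (Finset.mem_filter.mp hiNmem).2
    have hN' : ∀ k, lam k < 0 → t k ≤ t iN := fun k hk =>
      hiNmax k (Finset.mem_filter.mpr ⟨Finset.mem_univ _, hk⟩)
    have hPN : iP ≠ iN := fun h => by rw [h] at hiP; linarith
    set Q : Fin (m + 1) → Prop := fun i => ∀ k, k ≠ i → 0 < lam k * (t k - t i) with hQdef
    have hQmem : ∀ i, Q i → i = iP ∨ i = iN := by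
      intro i hQI
      rcases (hlam i).lt_or_gt with hneg | hpos'
      · right
        by_contra hne
        have h1 := hQI iN (fun h => hne h.symm)
        have h2 : t i ≤ t iN := hN' i hneg
        nlinarith
      · left
        by_contra hne
        have h1 := hQI iP (fun h => hne h.symm)
        have h2 : t iP ≤ t i := hP' i hpos'
        nlinarith
    have hsum' : ∑ i, Real.sign (lam i) * (if Q i then (1:ℝ) else 0)
        = ∑ i ∈ ({iP, iN} : Finset (Fin (m + 1))),
            Real.sign (lam i) * (if Q i then (1:ℝ) else 0) := by
      refine (Finset.sum_subset (Finset.subset_univ _) ?_).symm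
      intro i _ hi
      have : ¬ Q i := by
        intro hQI
        rcases hQmem i hQI with rfl | rfl <;>
          simp [Finset.mem_insert, Finset.mem_singleton] at hi
      rw [if_neg this, mul_zero]
    rw [hsum', Finset.sum_pair hPN]
    by_cases hc : t iN < t iP
    · have QiP : Q iP := by
        intro k hk
        rcases (hlam k).lt_or_gt with hneg | hpos'
        · have := hN' k hneg
          nlinarith
        · have h1 : t iP < t k := lt_of_le_of_ne (hP' k hpos') (fun h => hk (ht h.symm))
          nlinarith
      have QiN : Q iN := by
        intro k hk
        rcases (hlam k).lt_or_gt with hneg | hpos'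
        · have h1 : t k ≤ t iN := hN' k hneg
          have h2 : t k < t iN := lt_of_le_of_ne h1 (fun h => hk (ht h))
          nlinarith
        · have := hP' k hpos'
          nlinarith
      rw [if_pos QiP, if_pos QiN, Real.sign_of_pos hiP, Real.sign_of_neg hiN]
      ring
    · have htne : t iN ≠ t iP := fun h => hPN (ht h).symm
      have hc' : t iP < t iN := lt_of_le_of_ne (not_lt.mp hc) (Ne.symm htne)
      have nQiP : ¬ Q iP := by
        intro hQI
        have := hQI iN (Ne.symm hPN)
        nlinarith
      have nQiN : ¬ Q iN := by
        intro hQI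
        have := hQI iP hPN
        nlinarith
      rw [if_neg nQiP, if_neg nQiN]
      ring

lemma continuous_mu (n : ℕ) (x : Fin (n + 1) → (Fin n → ℝ)) (k : Fin (n + 1)) :
    Continuous fun y => mu n x y k := by
  have hcoord : ∀ j : Fin n, Continuous fun y : Fin n → ℝ => ((Amat n x)⁻¹ *ᵥ (y - x 0)) j := by
    intro j
    simp only [Matrix.mulVec, dotProduct]
    exact continuous_finset_sum _ fun c _ =>
      (continuous_const.mul ((continuous_apply c).sub continuous_const))
  refine Fin.cases ?_ (fun j => ?_) k
  · simp only [mu, Fin.cons_zero]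
    exact continuous_const.sub (continuous_finset_sum _ fun c _ => hcoord c)
  · simp only [mu, Fin.cons_succ]
    exact hcoord j

section main3
variable {n : ℕ} {x : Fin (n + 1) → (Fin n → ℝ)} {a : Fin n → ℝ} {lam : Fin (n + 1) → ℝ}

lemma measurableSet_facetCone (hA : (Amat n x).det ≠ 0)
    (hsum : ∑ k, lam k = 1) (hbary : a = ∑ k, lam k • x k)
    {i : Fin (n + 1)} (hli : lam i ≠ 0) :
    MeasurableSet (facetCone n x a i) := by
  have : facetCone n x a i
      = ⋂ k, ⋂ (_ : k ≠ i), {y | 0 ≤ mu n x y k - (mu n x y i / lam i) * lam k} := by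
    ext y
    rw [Set.mem_iInter]
    simp only [Set.mem_iInter, Set.mem_setOf_eq]
    exact mem_facetCone_iff hA hsum hbary hli y
  rw [this]
  refine MeasurableSet.iInter fun k => MeasurableSet.iInter fun _ => ?_
  exact measurableSet_le measurable_const
    (((continuous_mu n x k).sub (((continuous_mu n x i).div_const _).mul continuous_const)
      ).measurable)

/-- The linear part of `y ↦ mu n x y k`. -/
noncomputable def muLin (n : ℕ) (x : Fin (n + 1) → (Fin n → ℝ)) (k : Fin (n + 1)) :
    (Fin n → ℝ) →ₗ[ℝ] ℝ :=
  Fin.cases (motive := fun _ => (Fin n → ℝ) →ₗ[ℝ] ℝ)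
    (- ∑ j, LinearMap.proj j ∘ₗ Matrix.mulVecLin (Amat n x)⁻¹)
    (fun j => LinearMap.proj j ∘ₗ Matrix.mulVecLin (Amat n x)⁻¹) k

lemma mu_sub_eq (n : ℕ) (x : Fin (n + 1) → (Fin n → ℝ)) (k : Fin (n + 1))
    (y y' : Fin n → ℝ) : mu n x y k - mu n x y' k = muLin n x k (y - y') := by
  have hvec : ((Amat n x)⁻¹ *ᵥ (y - x 0)) - ((Amat n x)⁻¹ *ᵥ (y' - x 0))
      = (Amat n x)⁻¹ *ᵥ (y - y') := by
    rw [← Matrix.mulVec_sub]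
    congr 1
    abel
  refine Fin.cases ?_ (fun j => ?_) k
  · simp only [mu, Fin.cons_zero, muLin, Fin.cases_zero, LinearMap.neg_apply,
      LinearMap.coe_sum, Finset.sum_apply, LinearMap.coe_comp, Function.comp_apply,
      LinearMap.proj_apply, Matrix.mulVecLin_apply]
    have := congrFun hvec
    simp only [Pi.sub_apply] at this
    have hsum2 : ∑ c : Fin n, ((Amat n x)⁻¹ *ᵥ (y - y')) c
        = (∑ c : Fin n, ((Amat n x)⁻¹ *ᵥ (y - x 0)) c)
          - ∑ c : Fin n, ((Amat n x)⁻¹ *ᵥ (y' - x 0)) c := by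
      rw [← Finset.sum_sub_distrib]
      exact Finset.sum_congr rfl fun c _ => (this c).symm
    rw [hsum2]
    ring
  · simp only [mu, Fin.cons_succ, muLin, Fin.cases_succ, LinearMap.coe_comp,
      Function.comp_apply, LinearMap.proj_apply, Matrix.mulVecLin_apply]
    exact congrFun hvec j

lemma hyperplane_null (hA : (Amat n x).det ≠ 0)
    {i k : Fin (n + 1)} (hik : k ≠ i) (hli : lam i ≠ 0) :
    volume {y : Fin n → ℝ | lam i * mu n x y k - lam k * mu n x y i = 0} = 0 := by
  set d : (Fin n → ℝ) → ℝ := fun y => lam i * mu n x y k - lam k * mu n x y i with hd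
  set L : (Fin n → ℝ) →ₗ[ℝ] ℝ := lam i • muLin n x k - lam k • muLin n x i with hL
  have hdiff : ∀ y y', d y - d y' = L (y - y') := by
    intro y y'
    simp only [hd, hL, LinearMap.sub_apply, LinearMap.smul_apply, smul_eq_mul]
    have h1 := mu_sub_eq n x k y y'
    have h2 := mu_sub_eq n x i y y'
    linear_combination lam i * h1 - lam k * h2
  have hdxk : d (x k) = lam i := by
    simp only [hd, mu_vertex hA]
    simp [Ne.symm hik]
  by_cases hempty : {y : Fin n → ℝ | d y = 0} = ∅
  · rw [hempty]
    simp
  · obtain ⟨y0, hy0⟩ := Set.nonempty_iff_ne_empty.mpr hempty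
    have hy0' : d y0 = 0 := hy0
    have hset : {y : Fin n → ℝ | d y = 0} = (fun y => y - y0) ⁻¹' (LinearMap.ker L) := by
      ext y
      simp only [Set.mem_setOf_eq, Set.mem_preimage, SetLike.mem_coe, LinearMap.mem_ker]
      constructor
      · intro h
        rw [← hdiff y y0, h, hy0', sub_zero]
      · intro h
        have := hdiff y y0
        rw [h, hy0'] at this
        linarith
    have hker : LinearMap.ker L ≠ ⊤ := by
      intro htop
      have hmem : x k - y0 ∈ LinearMap.ker L := htop ▸ Submodule.mem_top
      rw [LinearMap.mem_ker] at hmem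
      rw [← hdiff (x k) y0, hdxk, hy0', sub_zero] at hmem
      exact hli hmem
    have hnull : volume ((LinearMap.ker L : Submodule ℝ (Fin n → ℝ)) : Set (Fin n → ℝ)) = 0 :=
      MeasureTheory.Measure.addHaar_submodule volume _ hker
    have : (fun y : Fin n → ℝ => y - y0) ⁻¹' (LinearMap.ker L) 
        = (fun y : Fin n → ℝ => y + (-y0)) ⁻¹' (LinearMap.ker L) := by
      simp [sub_eq_add_neg]
    rw [hset, this, measure_preimage_add_right, hnull]

lemma x_injective (hA : (Amat n x).det ≠ 0) : Function.Injective x := by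
  intro i j hij
  by_contra hne
  have := coeff_unique hA
      (fun k => (if k = i then (1:ℝ) else 0) - if k = j then 1 else 0) ?_ ?_ i
  · simp [hne] at this
  · rw [Finset.sum_sub_distrib]
    simp
  · have e : ∀ k : Fin (n + 1),
        ((if k = i then (1:ℝ) else 0) - if k = j then 1 else 0) • x k
        = (if k = i then (1:ℝ) else 0) • x k - (if k = j then (1:ℝ) else 0) • x k := by
      intro k; rw [sub_smul]
    rw [Finset.sum_congr rfl fun k _ => e k, Finset.sum_sub_distrib]
    simp [Finset.sum_ite_eq', hij]

lemma hull_iff (hA : (Amat n x).det ≠ 0)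
    (hsum : ∑ k, lam k = 1) (hbary : a = ∑ k, lam k • x k) (hlam : ∀ i, lam i ≠ 0) :
    (a ∈ convexHull ℝ (Set.range x)) ↔ ∀ k, 0 < lam k := by
  constructor
  · intro hmem
    have hrange : Set.range x = ((Finset.univ.image x : Finset (Fin n → ℝ)) : Set (Fin n → ℝ)) := by
      simp
    rw [hrange, Finset.mem_convexHull'] at hmem
    obtain ⟨w, hw0, hw1, hwa⟩ := hmem
    have hinj : Set.InjOn x ↑(Finset.univ : Finset (Fin (n + 1))) := fun p _ q _ h => x_injective hA h
    rw [Finset.sum_image hinj] at hw1 hwa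
    have huniq : ∀ k, lam k - w (x k) = 0 := by
      apply coeff_unique hA
      · rw [Finset.sum_sub_distrib, hsum, hw1, sub_self]
      · have e : ∀ k : Fin (n + 1), (lam k - w (x k)) • x k
            = lam k • x k - w (x k) • x k := fun k => sub_smul _ _ _
        rw [Finset.sum_congr rfl fun k _ => e k, Finset.sum_sub_distrib, ← hbary, hwa, sub_self]
    intro k
    have hwk : 0 ≤ w (x k) := hw0 (x k) (Finset.mem_image_of_mem x (Finset.mem_univ k))
    have := huniq k
    rcases (hlam k).lt_or_gt with h | h
    · linarith
    · exact h
  · intro hpos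
    exact mem_convexHull_of_exists_fintype lam x (fun k => (hpos k).le) hsum
      (fun k => Set.mem_range_self k) hbary.symm

lemma sign_helper (m : ℕ) {c d : ℝ} (hc : c ≠ 0) (hd : 0 < d) :
    (-1 : ℝ) ^ m * Real.sign ((-1) ^ m * c * d) = Real.sign c := by
  have hcd : Real.sign (c * d) = Real.sign c := by
    rcases hc.lt_or_gt with h | h
    · rw [Real.sign_of_neg h, Real.sign_of_neg (mul_neg_of_neg_of_pos h hd)]
    · rw [Real.sign_of_pos h, Real.sign_of_pos (mul_pos h hd)]
  rcases Nat.even_or_odd m with he | ho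
  · rw [he.neg_one_pow]
    rw [one_mul, one_mul, hcd]
  · rw [ho.neg_one_pow]
    have : (-1 : ℝ) * c * d = -(c * d) := by ring
    rw [this, Real.sign_neg, hcd]
    ring


/-- for a positively oriented simplex `[x_0,…,x_n]` and an apex `a`
with all barycentric coordinates nonzero, the signed sum of the integrals of an
integrable function over the infinite facet cones equals `∫ f` if `a` lies in the
simplex and `0` otherwise. -/
theorem stmt13 (n : ℕ) (x : Fin (n + 1) → (Fin n → ℝ)) (a : Fin n → ℝ)
    (hdet : 0 < (Matrix.of fun r c : Fin n => (x c.succ - x 0) r).det)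
    (lam : Fin (n + 1) → ℝ)
    (hsum : ∑ k, lam k = 1) (hbary : a = ∑ k, lam k • x k)
    (hlam : ∀ i, lam i ≠ 0)
    (f : (Fin n → ℝ) → ℝ) (hf : Integrable f) :
    ∑ i : Fin (n + 1),
        (-1 : ℝ) ^ (i : ℕ) * Real.sign (coneMatrix n x a i).det
          * ∫ y in facetCone n x a i, f y
      = if a ∈ convexHull ℝ (Set.range x) then ∫ y, f y else 0 := by
  have hdetA : 0 < (Amat n x).det := hdet
  have hA : (Amat n x).det ≠ 0 := ne_of_gt hdetA
  -- step 1 : signs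
  have hsign : ∀ i : Fin (n + 1),
      (-1 : ℝ) ^ (i : ℕ) * Real.sign (coneMatrix n x a i).det = Real.sign (lam i) := by
    intro i
    rw [det_coneMatrix hsum hbary i]
    exact sign_helper (i : ℕ) (hlam i) hdetA
  -- the indicator functions
  set g : Fin (n + 1) → (Fin n → ℝ) → ℝ :=
    fun i => (facetCone n x a i).indicator (fun y => Real.sign (lam i) * f y) with hg
  have hmeas : ∀ i : Fin (n + 1), MeasurableSet (facetCone n x a i) :=
    fun i => measurableSet_facetCone hA hsum hbary (hlam i)
  have hint : ∀ i : Fin (n + 1), Integrable (g i) :=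
    fun i => (hf.const_mul _).indicator (hmeas i)
  -- the null set
  set S : Set (Fin n → ℝ) :=
    ⋃ i, ⋃ k, ⋃ (_ : k ≠ i), {y | lam i * mu n x y k - lam k * mu n x y i = 0} with hSdef
  have hSnull : volume S = 0 := by
    refine measure_iUnion_null fun i => measure_iUnion_null fun k =>
      measure_iUnion_null fun hik => ?_
    exact hyperplane_null hA hik (hlam i)
  have hae : ∀ᵐ y : Fin n → ℝ, y ∉ S := (MeasureTheory.compl_mem_ae_iff).mpr hSnull
  have hpos : ∃ i, 0 < lam i := by
    by_contra h
    push_neg at h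
    have : ∑ k, lam k ≤ 0 := Finset.sum_nonpos fun k _ => h k
    linarith
  calc ∑ i : Fin (n + 1), (-1 : ℝ) ^ (i : ℕ) * Real.sign (coneMatrix n x a i).det
          * ∫ y in facetCone n x a i, f y
      = ∑ i : Fin (n + 1), ∫ y, g i y := by
        refine Finset.sum_congr rfl fun i _ => ?_
        rw [hsign i, hg]
        rw [MeasureTheory.integral_indicator (hmeas i), MeasureTheory.integral_const_mul]
    _ = ∫ y, ∑ i : Fin (n + 1), g i y := (integral_finset_sum _ fun i _ => hint i).symm
    _ = ∫ y, (if ∀ k, 0 < lam k then (1:ℝ) else 0) * f y := by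
        refine integral_congr_ae ?_
        filter_upwards [hae] with y hy
        have hnot : ∀ i k : Fin (n + 1), k ≠ i →
            lam i * mu n x y k - lam k * mu n x y i ≠ 0 := by
          intro i k hik h0
          exact hy (by
            rw [hSdef]
            exact Set.mem_iUnion.mpr ⟨i, Set.mem_iUnion.mpr ⟨k,
              Set.mem_iUnion.mpr ⟨hik, h0⟩⟩⟩)
        set t : Fin (n + 1) → ℝ := fun k => mu n x y k / lam k with htdef
        have hmem_iff : ∀ i : Fin (n + 1), (y ∈ facetCone n x a i) ↔
            ∀ k, k ≠ i → 0 < lam k * (t k - t i) := by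
          intro i
          rw [mem_facetCone_iff hA hsum hbary (hlam i) y]
          refine forall_congr' fun k => ?_
          refine imp_congr_right fun hk => ?_
          have hmk : lam k * (mu n x y k / lam k) = mu n x y k :=
            mul_div_cancel₀ _ (hlam k)
          have hid : lam k * (t k - t i) = mu n x y k - (mu n x y i / lam i) * lam k := by
            calc lam k * (t k - t i)
                = lam k * (mu n x y k / lam k) - lam k * (mu n x y i / lam i) := by
                  rw [htdef]; ring
              _ = mu n x y k - (mu n x y i / lam i) * lam k := by rw [hmk]; ring
          have hne : mu n x y k - (mu n x y i / lam i) * lam k ≠ 0 := by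
            intro h0
            apply hnot i k hk
            have h0' : mu n x y k = mu n x y i / lam i * lam k := by linarith
            rw [h0']
            field_simp [hlam i]
            ring
          rw [hid]
          constructor
          · intro hle
            exact lt_of_le_of_ne hle (Ne.symm hne)
          · exact le_of_lt
        have htinj : Function.Injective t := by
          intro i k hik
          by_contra hne
          apply hnot i k (fun h => hne h.symm)
          have hik' : mu n x y i / lam i = mu n x y k / lam k := hik
          field_simp [hlam i, hlam k] at hik'
          linarith [hik']
        have hterm : ∀ i : Fin (n + 1), g i y
            = Real.sign (lam i) * (if ∀ k, k ≠ i → 0 < lam k * (t k - t i) then (1:ℝ) else 0)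
              * f y := by
          intro i
          rw [hg]
          simp only [Set.indicator_apply]
          by_cases hmem : y ∈ facetCone n x a i
          · rw [if_pos hmem, if_pos ((hmem_iff i).mp hmem)]
            ring
          · rw [if_neg hmem, if_neg (fun h => hmem ((hmem_iff i).mpr h))]
            ring
        rw [Finset.sum_congr rfl fun i _ => hterm i, ← Finset.sum_mul,
          key_comb lam t hlam hpos htinj]
    _ = (if ∀ k, 0 < lam k then (1:ℝ) else 0) * ∫ y, f y :=
        MeasureTheory.integral_const_mul _ _
    _ = if a ∈ convexHull ℝ (Set.range x) then ∫ y, f y else 0 := by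
        rw [hull_iff hA hsum hbary hlam]
        split_ifs <;> simp
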